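/- If n ≥ 4 and n ≡ 1, 7, 8, 11, 12 or 14 (mod 15), then the largest minimum weight d(n,4) among all binary LCD [n,4] codes satisfies d(n,4) = ⌊8n/15⌋ or d(n,4) = ⌊8n/15⌋ − 1. If n ≥ 4 and n ≡ 0 (mod 15), then d(n,4) = ⌊8n/15⌋, ⌊8n/15⌋ − 1 or ⌊8n/15⌋ − 2. -/

import Mathlib

/-- The (Hamming) weight of a vector over `F_2`. -/
def wt {n : ℕ} (x : Fin n → ZMod 2) : ℕ :=
  Finset.card (Finset.univ.filter fun i => x i ≠ 0)

/-- The dual code of a binary code `C`, with respect to the standard inner product. -/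
def dualCode {n : ℕ} (C : Submodule (ZMod 2) (Fin n → ZMod 2)) :
    Submodule (ZMod 2) (Fin n → ZMod 2) where
  carrier := {x | ∀ y ∈ C, ∑ i, x i * y i = 0}
  add_mem' := by
    intro a b ha hb y hy
    simp [Pi.add_apply, add_mul, Finset.sum_add_distrib, ha y hy, hb y hy]
  zero_mem' := by
    intro y hy
    simp
  smul_mem' := by
    intro c a ha y hy
    simp only [Pi.smul_apply, smul_eq_mul, mul_assoc, ← Finset.mul_sum, ha y hy, mul_zero]

/-- A binary code is linear complementary dual (LCD) if it meets its dual trivially. -/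
def IsLCD {n : ℕ} (C : Submodule (ZMod 2) (Fin n → ZMod 2)) : Prop :=
  C ⊓ dualCode C = ⊥

/-- The minimum weight of a binary code: the smallest weight of a nonzero codeword. -/
noncomputable def minWt {n : ℕ} (C : Submodule (ZMod 2) (Fin n → ZMod 2)) : ℕ :=
  sInf {w | ∃ x ∈ C, x ≠ 0 ∧ wt x = w}

/-- `dLCD n k` is the largest minimum weight among all binary LCD `[n,k]` codes. -/
noncomputable def dLCD (n k : ℕ) : ℕ :=
  sSup {d | ∃ C : Submodule (ZMod 2) (Fin n → ZMod 2),
    Module.finrank (ZMod 2) C = k ∧ IsLCD C ∧ minWt C = d}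

/-! ### Auxiliary material -/

lemma wt_eq_sum {n : ℕ} (x : Fin n → ZMod 2) :
    wt x = ∑ j, if x j ≠ 0 then 1 else 0 := by
  simp [wt, Finset.card_filter]

/-- Generator matrix of the `[15,4,8]` simplex code. -/
def Smx : Fin 4 → Fin 15 → ZMod 2 :=
  ![![1,0,1,0,1,0,1,0,1,0,1,0,1,0,1],
    ![0,1,1,0,0,1,1,0,0,1,1,0,0,1,1],
    ![0,0,0,1,1,1,1,0,0,0,0,1,1,1,1],
    ![0,0,0,0,0,0,0,1,1,1,1,1,1,1,1]]

lemma simplex_wt : ∀ m : Fin 4 → ZMod 2, m ≠ 0 →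
    (∑ s : Fin 15, if (∑ i, m i * Smx i s) ≠ 0 then 1 else 0) = 8 := by decide

lemma simplex_selfdual : ∀ m m' : Fin 4 → ZMod 2,
    (∑ s : Fin 15, (∑ i, m i * Smx i s) * (∑ k, m' k * Smx k s)) = 0 := by decide

/-- Plotkin-type averaging bound: any binary `[n,4]` code has `15 d ≤ 8 n`. -/
lemma plotkin_bound {n : ℕ} (C : Submodule (ZMod 2) (Fin n → ZMod 2))
    (hC : Module.finrank (ZMod 2) C = 4) : 15 * minWt C ≤ 8 * n := by
  haveI : Fintype C := Fintype.ofFinite C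
  have hv1 : ∀ v : ZMod 2, v ≠ 0 → v = 1 := by decide
  have hv2 : ∀ v : ZMod 2, v + v = 0 := by decide
  have hcard : Fintype.card C = 16 := by
    rw [Module.card_eq_pow_finrank (K := ZMod 2) (V := C), hC, ZMod.card]
    norm_num
  -- per-coordinate count
  have key : ∀ j : Fin n, (∑ y : C, if (y : Fin n → ZMod 2) j ≠ 0 then 1 else 0) ≤ 8 := by
    intro j
    by_cases hz : ∃ a ∈ C, a j ≠ 0
    · obtain ⟨a, haC, haj⟩ := hz
      have ha1 : a j = 1 := hv1 _ haj
      have haa : ∀ y : Fin n → ZMod 2, y + a + a = y := by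
        intro y; funext i; simp [add_assoc, hv2]
      let φ : C ≃ C :=
        { toFun := fun y => ⟨(y : Fin n → ZMod 2) + a, C.add_mem y.2 haC⟩
          invFun := fun y => ⟨(y : Fin n → ZMod 2) + a, C.add_mem y.2 haC⟩
          left_inv := fun y => by ext1; simp [haa]
          right_inv := fun y => by ext1; simp [haa] }
      have h1 : (∑ y : C, if ((y : Fin n → ZMod 2) + a) j ≠ 0 then 1 else 0)
          = ∑ y : C, if (y : Fin n → ZMod 2) j ≠ 0 then 1 else 0 :=
        Fintype.sum_equiv φ _ _ (fun y => rfl)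
      have h2 : ∀ y : C, (if ((y : Fin n → ZMod 2) + a) j ≠ 0 then (1:ℕ) else 0)
          = if (y : Fin n → ZMod 2) j = 0 then 1 else 0 := by
        intro y
        have : ((y : Fin n → ZMod 2) + a) j = (y : Fin n → ZMod 2) j + 1 := by
          simp [ha1]
        rw [this]
        have : ∀ v : ZMod 2, (if v + 1 ≠ 0 then (1:ℕ) else 0) = if v = 0 then 1 else 0 := by
          decide
        exact this _
      have h3 : (∑ y : C, if (y : Fin n → ZMod 2) j ≠ 0 then 1 else 0)
          + (∑ y : C, if (y : Fin n → ZMod 2) j ≠ 0 then 1 else 0) = 16 := by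
        have hterm : ∀ y : C, (if ((y : Fin n → ZMod 2) + a) j ≠ 0 then (1:ℕ) else 0)
            + (if (y : Fin n → ZMod 2) j ≠ 0 then 1 else 0) = 1 := by
          intro y
          rw [h2 y]
          by_cases hy : (y : Fin n → ZMod 2) j = 0 <;> simp [hy]
        have hS : (∑ y : C, ((if ((y : Fin n → ZMod 2) + a) j ≠ 0 then (1:ℕ) else 0)
            + (if (y : Fin n → ZMod 2) j ≠ 0 then 1 else 0))) = 16 := by
          rw [Finset.sum_congr rfl (fun y _ => hterm y)]
          simp [hcard]
        rw [Finset.sum_add_distrib, h1] at hS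
        exact hS
      omega
    · push_neg at hz
      have : ∀ y : C, (if (y : Fin n → ZMod 2) j ≠ 0 then (1:ℕ) else 0) = 0 := by
        intro y; simp [hz _ y.2]
      rw [Finset.sum_congr rfl (fun y _ => this y)]
      simp
  -- total weight bound
  have total : (∑ y : C, wt (y : Fin n → ZMod 2)) ≤ 8 * n := by
    calc (∑ y : C, wt (y : Fin n → ZMod 2))
        = ∑ y : C, ∑ j, if (y : Fin n → ZMod 2) j ≠ 0 then 1 else 0 := by
          simp only [wt_eq_sum]
      _ = ∑ j, ∑ y : C, if (y : Fin n → ZMod 2) j ≠ 0 then 1 else 0 := Finset.sum_comm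
      _ ≤ ∑ _j : Fin n, 8 := Finset.sum_le_sum (fun j _ => key j)
      _ = 8 * n := by simp [Finset.sum_const, Nat.mul_comm]
  -- C has a nonzero element
  have hne : ∃ x ∈ C, x ≠ 0 := by
    by_contra h
    push_neg at h
    have : C = ⊥ := by
      rw [Submodule.eq_bot_iff]; exact h
    rw [this] at hC
    simp at hC
  obtain ⟨x0, hx0C, hx0⟩ := hne
  have hWne : {w | ∃ x ∈ C, x ≠ 0 ∧ wt x = w}.Nonempty := ⟨wt x0, x0, hx0C, hx0, rfl⟩
  have hd_le : ∀ y : C, (y : Fin n → ZMod 2) ≠ 0 → minWt C ≤ wt (y : Fin n → ZMod 2) :=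
    fun y hy => Nat.sInf_le ⟨(y : Fin n → ZMod 2), y.2, hy, rfl⟩
  -- sum over the 15 nonzero codewords
  have hzeroC : (0 : Fin n → ZMod 2) ∈ C := C.zero_mem
  have hcount : (Finset.univ.erase (0 : C)).card = 15 := by
    rw [Finset.card_erase_of_mem (Finset.mem_univ _), Finset.card_univ, hcard]
  have hsumics : 15 * minWt C ≤ ∑ y : C, wt (y : Fin n → ZMod 2) := by
    have h1 : ∑ y ∈ Finset.univ.erase (0 : C), minWt C
        ≤ ∑ y ∈ Finset.univ.erase (0 : C), wt (y : Fin n → ZMod 2) := by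
      apply Finset.sum_le_sum
      intro y hy
      apply hd_le
      intro hy0
      exact (Finset.mem_erase.1 hy).1 (Subtype.ext hy0)
    have h2 : ∑ y ∈ Finset.univ.erase (0 : C), wt (y : Fin n → ZMod 2)
        ≤ ∑ y : C, wt (y : Fin n → ZMod 2) :=
      Finset.sum_le_sum_of_subset (Finset.erase_subset _ _)
    calc 15 * minWt C = ∑ _y ∈ Finset.univ.erase (0 : C), minWt C := by
            rw [Finset.sum_const, hcount, smul_eq_mul]
      _ ≤ _ := h1.trans h2
  exact hsumics.trans total

/-- Existence of a good LCD code: `t` copies of the simplex code glued with tail `A`. -/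
lemma exists_good_code (t L n tgt : ℕ) (hn : n = t * 15 + L)
    (A : Fin 4 → Fin L → ZMod 2)
    (hwt : ∀ m : Fin 4 → ZMod 2, m ≠ 0 →
      tgt ≤ ∑ l, if (∑ i, m i * A i l) ≠ 0 then 1 else 0)
    (hlcd : ∀ m : Fin 4 → ZMod 2,
      (∀ m' : Fin 4 → ZMod 2, ∑ l, (∑ i, m i * A i l) * (∑ k, m' k * A k l) = 0) → m = 0)
    (htgt : 1 ≤ tgt) :
    ∃ C : Submodule (ZMod 2) (Fin n → ZMod 2),
      Module.finrank (ZMod 2) C = 4 ∧ IsLCD C ∧ 8 * t + tgt ≤ minWt C := by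
  classical
  let ι := (Fin t × Fin 15) ⊕ Fin L
  let e : ι ≃ Fin n :=
    ((finProdFinEquiv.sumCongr (Equiv.refl (Fin L))).trans finSumFinEquiv).trans
      (finCongr hn.symm)
  let G : Fin 4 → ι → ZMod 2 := fun i => Sum.elim (fun p => Smx i p.2) (A i)
  let E : (Fin 4 → ZMod 2) →ₗ[ZMod 2] (Fin n → ZMod 2) :=
    { toFun := fun m j => ∑ i, m i * G i (e.symm j)
      map_add' := by
        intro m m'; funext j
        simp [add_mul, Finset.sum_add_distrib]
      map_smul' := by
        intro c m; funext j
        simp [Finset.mul_sum, mul_assoc] }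
  -- weight of codewords
  have hwtE : ∀ m : Fin 4 → ZMod 2, m ≠ 0 →
      wt (E m) = 8 * t + ∑ l, if (∑ i, m i * A i l) ≠ 0 then 1 else 0 := by
    intro m hm
    have h0 : wt (E m) = ∑ p : ι, if (∑ i, m i * G i p) ≠ 0 then 1 else 0 := by
      rw [wt_eq_sum]
      exact Equiv.sum_comp e.symm (fun p => if (∑ i, m i * G i p) ≠ 0 then 1 else 0)
    rw [h0, Fintype.sum_sum_type, Fintype.sum_prod_type]
    have h1 : ∀ b : Fin t,
        (∑ s : Fin 15, if (∑ i, m i * G i (Sum.inl (b, s))) ≠ 0 then 1 else 0) = 8 := by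
      intro b
      exact simplex_wt m hm
    rw [Finset.sum_congr rfl (fun b _ => h1 b)]
    simp [Finset.sum_const, Nat.mul_comm, G]
    exact Finset.sum_congr rfl (fun x _ => by by_cases hx : ∑ i, m i * A i x = 0 <;> simp [hx])
  have hwtE_pos : ∀ m : Fin 4 → ZMod 2, m ≠ 0 → E m ≠ 0 := by
    intro m hm h0
    have h1 := hwtE m hm
    rw [h0] at h1
    have h2 : wt (0 : Fin n → ZMod 2) = 0 := by simp [wt]
    have h3 := hwt m hm
    omega
  have hinj : Function.Injective E := by
    rw [← LinearMap.ker_eq_bot, Submodule.eq_bot_iff]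
    intro m hm
    by_contra hm0
    exact hwtE_pos m hm0 hm
  -- inner products of codewords
  have hip : ∀ m m' : Fin 4 → ZMod 2,
      (∑ j, E m j * E m' j)
        = ∑ l, (∑ i, m i * A i l) * (∑ k, m' k * A k l) := by
    intro m m'
    have h0 : (∑ j, E m j * E m' j)
        = ∑ p : ι, (∑ i, m i * G i p) * (∑ k, m' k * G k p) :=
      Equiv.sum_comp e.symm (fun p => (∑ i, m i * G i p) * (∑ k, m' k * G k p))
    rw [h0, Fintype.sum_sum_type, Fintype.sum_prod_type]
    have h1 : ∀ b : Fin t,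
        (∑ s : Fin 15, (∑ i, m i * G i (Sum.inl (b, s))) * (∑ k, m' k * G k (Sum.inl (b, s))))
          = 0 := fun b => simplex_selfdual m m'
    rw [Finset.sum_congr rfl (fun b _ => h1 b)]
    simp [G]
  refine ⟨LinearMap.range E, ?_, ?_, ?_⟩
  · rw [LinearMap.finrank_range_of_inj hinj, Module.finrank_pi]
    simp
  · rw [IsLCD, Submodule.eq_bot_iff]
    rintro x ⟨hx1, hx2⟩
    obtain ⟨m, rfl⟩ := hx1
    have hm0 : m = 0 := by
      apply hlcd
      intro m'
      rw [← hip m m']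
      exact hx2 (E m') ⟨m', rfl⟩
    rw [hm0, map_zero]
  · -- minWt bound
    have hne : {w | ∃ x ∈ LinearMap.range E, x ≠ 0 ∧ wt x = w}.Nonempty := by
      refine ⟨wt (E 1), E 1, ⟨1, rfl⟩, ?_, rfl⟩
      exact hwtE_pos 1 (by intro h; exact absurd (congrFun h 0) (by decide))
    obtain ⟨x, hxC, hx0, hxw⟩ := Nat.sInf_mem hne
    obtain ⟨m, rfl⟩ := hxC
    have hm0 : m ≠ 0 := by
      intro h; rw [h, map_zero] at hx0; exact hx0 rfl
    rw [minWt, ← hxw, hwtE m hm0]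
    have := hwt m hm0
    omega

/-- From a good code we get two-sided bounds on `dLCD n 4`. -/
lemma dLCD_bounds (t L n tgt : ℕ) (hn : n = t * 15 + L)
    (A : Fin 4 → Fin L → ZMod 2)
    (hwt : ∀ m : Fin 4 → ZMod 2, m ≠ 0 →
      tgt ≤ ∑ l, if (∑ i, m i * A i l) ≠ 0 then 1 else 0)
    (hlcd : ∀ m : Fin 4 → ZMod 2,
      (∀ m' : Fin 4 → ZMod 2, ∑ l, (∑ i, m i * A i l) * (∑ k, m' k * A k l) = 0) → m = 0)
    (htgt : 1 ≤ tgt) :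
    8 * t + tgt ≤ dLCD n 4 ∧ 15 * dLCD n 4 ≤ 8 * n := by
  obtain ⟨C, hC4, hClcd, hCw⟩ := exists_good_code t L n tgt hn A hwt hlcd htgt
  set D := {d | ∃ C : Submodule (ZMod 2) (Fin n → ZMod 2),
    Module.finrank (ZMod 2) C = 4 ∧ IsLCD C ∧ minWt C = d} with hD
  have hmem : minWt C ∈ D := ⟨C, hC4, hClcd, rfl⟩
  have hub : ∀ d ∈ D, d ≤ 8 * n / 15 := by
    rintro d ⟨C', h1, _, rfl⟩
    rw [Nat.le_div_iff_mul_le (by norm_num)]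
    have := plotkin_bound C' h1
    omega
  have hbdd : BddAbove D := ⟨8 * n / 15, hub⟩
  constructor
  · exact hCw.trans (le_csSup hbdd hmem)
  · have h := csSup_le ⟨_, hmem⟩ hub
    have : dLCD n 4 ≤ 8 * n / 15 := h
    have h15 : 8 * n / 15 * 15 ≤ 8 * n := Nat.div_mul_le_self _ _
    omega

def A7 : Fin 4 → Fin 7 → ZMod 2 :=
  ![![0,0,1,0,0,0,1],
    ![1,0,1,1,0,0,0],
    ![1,1,0,1,1,0,0],
    ![0,1,1,0,0,1,1]]

def A8 : Fin 4 → Fin 8 → ZMod 2 :=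
  ![![0,1,1,1,0,0,0,1],
    ![0,0,1,0,0,0,1,1],
    ![1,1,0,0,1,0,0,0],
    ![1,0,1,1,0,1,0,0]]

def A11 : Fin 4 → Fin 11 → ZMod 2 :=
  ![![0,1,1,0,1,1,0,1,1,1,1],
    ![0,1,0,1,1,1,1,1,0,0,0],
    ![1,1,0,0,0,1,0,0,0,1,0],
    ![0,1,1,0,0,0,1,1,0,0,1]]

def A12 : Fin 4 → Fin 12 → ZMod 2 :=
  ![![0,1,0,1,0,1,1,1,1,1,1,1],
    ![1,0,1,0,0,1,0,1,0,1,0,0],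
    ![1,1,0,0,0,1,1,0,0,1,1,0],
    ![0,1,1,0,1,1,0,0,1,0,1,1]]

def A14 : Fin 4 → Fin 14 → ZMod 2 :=
  ![![1,1,1,1,1,1,1,0,0,1,0,0,1,1],
    ![0,0,0,1,0,1,0,0,1,1,1,0,1,0],
    ![1,0,1,1,0,1,0,0,0,0,0,1,1,0],
    ![1,1,1,0,1,1,1,1,1,1,1,1,1,0]]

def A15 : Fin 4 → Fin 15 → ZMod 2 :=
  ![![1,1,1,1,0,0,1,1,0,0,1,0,1,1,1],
    ![0,1,1,0,1,1,1,0,1,1,1,1,0,1,1],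
    ![0,0,1,0,1,1,0,1,0,0,1,0,0,1,0],
    ![0,1,1,1,1,1,0,1,0,1,0,0,1,1,1]]

def A16 : Fin 4 → Fin 16 → ZMod 2 :=
  ![![1,0,0,1,1,1,0,1,0,1,1,1,1,0,0,0],
    ![1,1,1,1,1,1,0,1,0,1,0,0,0,1,0,1],
    ![0,1,0,1,1,0,0,0,1,1,0,0,0,1,1,0],
    ![1,0,1,1,0,1,1,0,1,1,0,0,1,1,1,0]]


lemma A7_wt : ∀ m : Fin 4 → ZMod 2, m ≠ 0 →
    2 ≤ ∑ l, if (∑ i, m i * A7 i l) ≠ 0 then 1 else 0 := by decide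
lemma A7_lcd : ∀ m : Fin 4 → ZMod 2,
    (∀ m' : Fin 4 → ZMod 2, ∑ l, (∑ i, m i * A7 i l) * (∑ k, m' k * A7 k l) = 0) → m = 0 := by
  decide

lemma A8_wt : ∀ m : Fin 4 → ZMod 2, m ≠ 0 →
    3 ≤ ∑ l, if (∑ i, m i * A8 i l) ≠ 0 then 1 else 0 := by decide
lemma A8_lcd : ∀ m : Fin 4 → ZMod 2,
    (∀ m' : Fin 4 → ZMod 2, ∑ l, (∑ i, m i * A8 i l) * (∑ k, m' k * A8 k l) = 0) → m = 0 := by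
  decide

lemma A11_wt : ∀ m : Fin 4 → ZMod 2, m ≠ 0 →
    4 ≤ ∑ l, if (∑ i, m i * A11 i l) ≠ 0 then 1 else 0 := by decide
lemma A11_lcd : ∀ m : Fin 4 → ZMod 2,
    (∀ m' : Fin 4 → ZMod 2, ∑ l, (∑ i, m i * A11 i l) * (∑ k, m' k * A11 k l) = 0) → m = 0 := by
  decide

lemma A12_wt : ∀ m : Fin 4 → ZMod 2, m ≠ 0 →
    5 ≤ ∑ l, if (∑ i, m i * A12 i l) ≠ 0 then 1 else 0 := by decide
lemma A12_lcd : ∀ m : Fin 4 → ZMod 2,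
    (∀ m' : Fin 4 → ZMod 2, ∑ l, (∑ i, m i * A12 i l) * (∑ k, m' k * A12 k l) = 0) → m = 0 := by
  decide

lemma A14_wt : ∀ m : Fin 4 → ZMod 2, m ≠ 0 →
    6 ≤ ∑ l, if (∑ i, m i * A14 i l) ≠ 0 then 1 else 0 := by decide
lemma A14_lcd : ∀ m : Fin 4 → ZMod 2,
    (∀ m' : Fin 4 → ZMod 2, ∑ l, (∑ i, m i * A14 i l) * (∑ k, m' k * A14 k l) = 0) → m = 0 := by
  decide

lemma A15_wt : ∀ m : Fin 4 → ZMod 2, m ≠ 0 →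
    6 ≤ ∑ l, if (∑ i, m i * A15 i l) ≠ 0 then 1 else 0 := by decide
lemma A15_lcd : ∀ m : Fin 4 → ZMod 2,
    (∀ m' : Fin 4 → ZMod 2, ∑ l, (∑ i, m i * A15 i l) * (∑ k, m' k * A15 k l) = 0) → m = 0 := by
  decide

lemma A16_wt : ∀ m : Fin 4 → ZMod 2, m ≠ 0 →
    7 ≤ ∑ l, if (∑ i, m i * A16 i l) ≠ 0 then 1 else 0 := by decide
lemma A16_lcd : ∀ m : Fin 4 → ZMod 2,
    (∀ m' : Fin 4 → ZMod 2, ∑ l, (∑ i, m i * A16 i l) * (∑ k, m' k * A16 k l) = 0) → m = 0 := by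
  decide

theorem lcd_dim4_twoOrThreeValues (n : ℕ) (hn : 4 ≤ n) :
    ((n % 15 = 1 ∨ n % 15 = 7 ∨ n % 15 = 8 ∨ n % 15 = 11 ∨ n % 15 = 12 ∨ n % 15 = 14) →
      dLCD n 4 = 8 * n / 15 ∨ dLCD n 4 = 8 * n / 15 - 1) ∧
    (n % 15 = 0 →
      dLCD n 4 = 8 * n / 15 ∨ dLCD n 4 = 8 * n / 15 - 1 ∨ dLCD n 4 = 8 * n / 15 - 2) := by
  constructor
  · rintro (h | h | h | h | h | h)
    · have hb := dLCD_bounds (n / 15 - 1) 16 n 7 (by omega) A16 A16_wt A16_lcd (by norm_num)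
      omega
    · have hb := dLCD_bounds (n / 15) 7 n 2 (by omega) A7 A7_wt A7_lcd (by norm_num)
      omega
    · have hb := dLCD_bounds (n / 15) 8 n 3 (by omega) A8 A8_wt A8_lcd (by norm_num)
      omega
    · have hb := dLCD_bounds (n / 15) 11 n 4 (by omega) A11 A11_wt A11_lcd (by norm_num)
      omega
    · have hb := dLCD_bounds (n / 15) 12 n 5 (by omega) A12 A12_wt A12_lcd (by norm_num)
      omega
    · have hb := dLCD_bounds (n / 15) 14 n 6 (by omega) A14 A14_wt A14_lcd (by norm_num)
      omega
  · intro h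
    have hb := dLCD_bounds (n / 15 - 1) 15 n 6 (by omega) A15 A15_wt A15_lcd (by norm_num)
    omega
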